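/- For every β ≥ β_0 > 0, M > 0, and b > 0 there exists a constant C (depending on β, b, M) such that for all sufficiently large n, if a ≥ C·n^{1/(1+2β)}·(log n)^{-1-1/(1+2β)} and a ≤ n/e, then h_n(a, f_0) < b for every sequence f_0 with sup_i i^{1+2β} f_{0,i}^2 ≤ M. -/

import Mathlib

set_option maxHeartbeats 1000000

open Real Filter Finset

/-- Bernoulli inequality for exponents in `(0,1]`. -/
lemma my_bern {t p : ℝ} (ht0 : 0 ≤ t) (ht1 : t ≤ 1) (hp0 : 0 < p) (hp1 : p ≤ 1) :
    (1 - t) ^ p ≤ 1 - p * t := by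
  have hpt : p * t ≤ 1 := by nlinarith
  have h1 : (1:ℝ) - t ≤ (1 - p * t) ^ (1 / p) := by
    have hB := one_add_mul_self_le_rpow_one_add (s := -(p * t)) (by linarith)
      (p := 1 / p) (by rw [le_div_iff₀ hp0]; nlinarith)
    have h2 : 1 + 1 / p * -(p * t) = 1 - t := by field_simp; ring
    rw [h2] at hB
    convert hB using 2; ring
  have h3 : ((1 - p*t) ^ (1/p)) ^ p = 1 - p * t := by
    rw [← Real.rpow_mul (by linarith), one_div_mul_cancel hp0.ne', Real.rpow_one]
  calc (1 - t) ^ p ≤ ((1 - p*t) ^ (1/p)) ^ p :=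
        Real.rpow_le_rpow (by linarith) h1 hp0.le
    _ = 1 - p * t := h3

lemma my_step {x p : ℝ} (hx : 1 ≤ x) (hp0 : 1/2 ≤ p) (hp1 : p < 1) :
    x ^ (p - 1) ≤ 2 * (x ^ p - (x - 1) ^ p) := by
  have hx0 : (0:ℝ) < x := by linarith
  have key : (x - 1) ^ p ≤ x ^ p - p * x ^ (p - 1) := by
    have hb := my_bern (t := 1 / x) (by positivity) (by rw [div_le_one hx0]; linarith)
      (by linarith) hp1.le
    have e1 : (x - 1) ^ p = x ^ p * (1 - 1/x) ^ p := by
      rw [← Real.mul_rpow hx0.le (by rw [sub_nonneg, div_le_one hx0]; linarith)]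
      congr 1
      field_simp
    have e2 : x ^ (p - 1) = x ^ p / x := by
      rw [Real.rpow_sub hx0, Real.rpow_one]
    rw [e1, e2]
    have hxp : (0:ℝ) < x ^ p := Real.rpow_pos_of_pos hx0 p
    calc x ^ p * (1 - 1/x) ^ p ≤ x ^ p * (1 - p * (1/x)) := by
          exact mul_le_mul_of_nonneg_left hb hxp.le
      _ = x ^ p - p * (x ^ p / x) := by field_simp
  have hxp1 : (0:ℝ) ≤ x ^ (p - 1) := Real.rpow_nonneg hx0.le _
  nlinarith

lemma my_sum_rpow_le {q : ℝ} (hq0 : 0 < q) (hq1 : q ≤ 1/2) (K : ℕ) :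
    ∑ i ∈ Finset.range K, ((i:ℝ) + 1) ^ (-q) ≤ 2 * (K:ℝ) ^ (1 - q) := by
  have hstep : ∀ i ∈ Finset.range K,
      ((i:ℝ) + 1) ^ (-q) ≤ 2 * (((i+1:ℕ):ℝ) ^ (1-q) - ((i:ℕ):ℝ) ^ (1-q)) := by
    intro i _
    have h := my_step (x := (i:ℝ) + 1) (by push_cast; linarith [Nat.cast_nonneg (α := ℝ) i])
      (p := 1 - q) (by linarith) (by linarith)
    have e : ((i:ℝ) + 1) - 1 = ((i:ℕ):ℝ) := by push_cast; ring
    rw [e] at h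
    have e2 : (1 - q) - 1 = -q := by ring
    rw [e2] at h
    convert h using 3 <;> push_cast <;> ring
  calc ∑ i ∈ Finset.range K, ((i:ℝ) + 1) ^ (-q)
      ≤ ∑ i ∈ Finset.range K, 2 * (((i+1:ℕ):ℝ) ^ (1-q) - ((i:ℕ):ℝ) ^ (1-q)) :=
        Finset.sum_le_sum hstep
    _ = 2 * ∑ i ∈ Finset.range K, ((((i+1:ℕ)):ℝ) ^ (1-q) - ((i:ℕ):ℝ) ^ (1-q)) := by
        rw [Finset.mul_sum]
    _ = 2 * (((K:ℕ):ℝ) ^ (1-q) - ((0:ℕ):ℝ) ^ (1-q)) := by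
        rw [Finset.sum_range_sub (f := fun i : ℕ => ((i:ℕ):ℝ) ^ (1-q))]
    _ = 2 * (K:ℝ) ^ (1 - q) := by
        norm_num
        rw [Real.zero_rpow (by linarith)]

noncomputable def gAfun (q c : ℝ) (i : ℕ) : ℝ :=
  if ((i:ℝ) + 1) ≤ c then ((i:ℝ) + 1) ^ (-q) else 0

noncomputable def gEfun (a c : ℝ) (i : ℕ) : ℝ :=
  if ((i:ℝ) + 1) ≤ c then Real.exp ((((i:ℝ) + 1) - c) / (2*a))
  else Real.exp ((c - ((i:ℝ) + 1)) / (2*a))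

lemma gAfun_nonneg (q c : ℝ) (i : ℕ) : 0 ≤ gAfun q c i := by
  unfold gAfun; split
  · positivity
  · exact le_rfl

lemma gEfun_nonneg (a c : ℝ) (i : ℕ) : 0 ≤ gEfun a c i := by
  unfold gEfun; split <;> positivity

lemma gAfun_support (q c : ℝ) (i : ℕ) (hi : i ∉ Finset.range ⌊c⌋₊) : gAfun q c i = 0 := by
  rw [Finset.mem_range, not_lt] at hi
  unfold gAfun
  rw [if_neg]
  push_neg
  calc c < ⌊c⌋₊ + 1 := Nat.lt_floor_add_one c
    _ ≤ (i:ℝ) + 1 := by have := (Nat.cast_le (α := ℝ)).mpr hi; linarith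

lemma gAfun_summable (q c : ℝ) : Summable (gAfun q c) :=
  summable_of_ne_finset_zero (s := Finset.range ⌊c⌋₊) (gAfun_support q c)

lemma gAfun_tsum_le {q c : ℝ} (hq0 : 0 < q) (hq1 : q ≤ 1/2) (hc : 0 ≤ c) :
    ∑' i, gAfun q c i ≤ 2 * c ^ (1 - q) := by
  rw [tsum_eq_sum (gAfun_support q c)]
  calc ∑ i ∈ Finset.range ⌊c⌋₊, gAfun q c i
      ≤ ∑ i ∈ Finset.range ⌊c⌋₊, ((i:ℝ) + 1) ^ (-q) := by
        apply Finset.sum_le_sum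
        intro i _
        unfold gAfun
        split
        · exact le_rfl
        · positivity
    _ ≤ 2 * ((⌊c⌋₊ : ℝ)) ^ (1 - q) := my_sum_rpow_le hq0 hq1 _
    _ ≤ 2 * c ^ (1 - q) := by
        have := Real.rpow_le_rpow (Nat.cast_nonneg _) (Nat.floor_le hc) (by linarith : (0:ℝ) ≤ 1 - q)
        linarith

lemma gEfun_le_geom {a c : ℝ} (ha : 1 ≤ a) (hc : 0 ≤ c) (i : ℕ) :
    gEfun a c i ≤ (Real.exp (-(1/(2*a))) ^ ⌊c⌋₊)⁻¹ * Real.exp (-(1/(2*a))) ^ i := by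
  set r := Real.exp (-(1/(2*a))) with hr
  have ha0 : (0:ℝ) < a := by linarith
  have hr0 : 0 < r := Real.exp_pos _
  have hr1 : r < 1 := by
    rw [hr, Real.exp_lt_one_iff]
    rw [neg_lt, neg_zero]
    positivity
  set m := ⌊c⌋₊ with hm
  rcases lt_or_ge i m with him | him
  · -- i < m, j = i+1 ≤ m ≤ c, branch true, value ≤ 1
    have hjc : ((i:ℝ) + 1) ≤ c := by
      calc ((i:ℝ) + 1) ≤ (m:ℝ) := by exact_mod_cast Nat.succ_le_of_lt him
        _ ≤ c := Nat.floor_le hc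
    unfold gEfun
    rw [if_pos hjc]
    have h1 : Real.exp ((((i:ℝ) + 1) - c) / (2*a)) ≤ 1 := by
      apply Real.exp_le_one_iff.mpr
      apply div_nonpos_of_nonpos_of_nonneg <;> [linarith; positivity]
    have h2 : r ^ m ≤ r ^ i := pow_le_pow_of_le_one hr0.le hr1.le him.le
    calc Real.exp ((((i:ℝ) + 1) - c) / (2*a)) ≤ 1 := h1
      _ ≤ (r ^ m)⁻¹ * r ^ i := by
          rw [← div_eq_inv_mul, le_div_iff₀ (by positivity)]
          linarith
  · -- i ≥ m : branch false
    have hjc : ¬ ((i:ℝ) + 1) ≤ c := by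
      push_neg
      calc c < (m:ℝ) + 1 := Nat.lt_floor_add_one c
        _ ≤ (i:ℝ) + 1 := by have := (Nat.cast_le (α := ℝ)).mpr him; linarith
    unfold gEfun
    rw [if_neg hjc]
    have key : Real.exp ((c - ((i:ℝ) + 1)) / (2*a)) ≤ r ^ (i - m) := by
      have : r ^ (i - m) = Real.exp (((i - m : ℕ) : ℝ) * (-(1/(2*a)))) := by
        rw [← Real.exp_nat_mul]
      rw [this]
      apply Real.exp_le_exp.mpr
      have hcast : ((i - m : ℕ) : ℝ) = (i:ℝ) - m := by
        push_cast [Nat.cast_sub him]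
        ring
      rw [hcast]
      rw [div_le_iff₀ (by positivity : (0:ℝ) < 2*a)]
      have hcm : c ≤ (m:ℝ) + 1 := (Nat.lt_floor_add_one c).le
      field_simp
      nlinarith [hcm]
    calc Real.exp ((c - ((i:ℝ) + 1)) / (2*a)) ≤ r ^ (i - m) := key
      _ = (r ^ m)⁻¹ * r ^ i := by
          rw [eq_inv_mul_iff_mul_eq₀ (by positivity), ← pow_add]
          congr 1
          omega

lemma gEfun_summable {a c : ℝ} (ha : 1 ≤ a) (hc : 0 ≤ c) : Summable (gEfun a c) := by
  set r := Real.exp (-(1/(2*a))) with hr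
  have hr0 : 0 < r := Real.exp_pos _
  have hr1 : r < 1 := by
    rw [hr, Real.exp_lt_one_iff, neg_lt, neg_zero]
    positivity
  apply Summable.of_nonneg_of_le (gEfun_nonneg a c) (gEfun_le_geom ha hc)
  exact ((summable_geometric_of_lt_one hr0.le hr1).mul_left _)

lemma one_sub_exp_inv_le {a : ℝ} (ha : 1 ≤ a) :
    (1 - Real.exp (-(1/(2*a))))⁻¹ ≤ 4 * a := by
  have ha0 : (0:ℝ) < a := by linarith
  set z : ℝ := 1/(2*a) with hz
  have hz0 : 0 < z := by positivity
  have hz1 : z ≤ 1/2 := by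
    rw [hz, div_le_div_iff₀ (by positivity) (by norm_num)]
    linarith
  have h1 : Real.exp (-z) ≤ (1 + z)⁻¹ := by
    rw [Real.exp_neg]
    apply inv_anti₀ (by positivity)
    exact Real.add_one_le_exp z |>.trans_eq' (by ring)
  have h2 : 1 - Real.exp (-z) ≥ z/2 := by
    have : (1:ℝ) - (1+z)⁻¹ = z/(1+z) := by field_simp; ring
    have h3 : z/(1+z) ≥ z/2 := by
      apply div_le_div_of_nonneg_left hz0.le (by positivity) (by linarith) |>.trans_eq' rfl
    linarith [h1, h3, this]
  have h4 : 0 < 1 - Real.exp (-z) := by linarith [hz0]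
  rw [inv_le_comm₀ h4 (by positivity)]
  have : (4*a)⁻¹ = z/2 := by rw [hz]; field_simp; ring
  linarith [this ▸ h2]

lemma gEfun_tsum_le {a c : ℝ} (ha : 1 ≤ a) (hc : 0 ≤ c) :
    ∑' i, gEfun a c i ≤ 8 * a := by
  have ha0 : (0:ℝ) < a := by linarith
  set r := Real.exp (-(1/(2*a))) with hr
  have hr0 : 0 < r := Real.exp_pos _
  have hr1 : r < 1 := by
    rw [hr, Real.exp_lt_one_iff, neg_lt, neg_zero]; positivity
  have hgeo : Summable (fun k : ℕ => r ^ k) := summable_geometric_of_lt_one hr0.le hr1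
  have hgeo_sum : ∑' k : ℕ, r ^ k = (1 - r)⁻¹ := tsum_geometric_of_lt_one hr0.le hr1
  set m := ⌊c⌋₊ with hm
  have hsum := gEfun_summable ha hc
  have hsplit := Summable.sum_add_tsum_nat_add (f := gEfun a c) m hsum
  -- first part
  have hfirst : ∑ i ∈ Finset.range m, gEfun a c i ≤ (1 - r)⁻¹ := by
    have hterm : ∀ i ∈ Finset.range m, gEfun a c i ≤ r ^ (m - 1 - i) := by
      intro i hi
      rw [Finset.mem_range] at hi
      have hjc : ((i:ℝ) + 1) ≤ c := by
        calc ((i:ℝ) + 1) ≤ (m:ℝ) := by exact_mod_cast Nat.succ_le_of_lt hi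
          _ ≤ c := Nat.floor_le hc
      unfold gEfun
      rw [if_pos hjc]
      have : r ^ (m - 1 - i) = Real.exp (((m - 1 - i : ℕ):ℝ) * (-(1/(2*a)))) := by
        rw [← Real.exp_nat_mul]
      rw [this]
      apply Real.exp_le_exp.mpr
      have hcast : ((m - 1 - i : ℕ):ℝ) = (m:ℝ) - 1 - i := by
        push_cast [Nat.cast_sub (by omega : 1 ≤ m), Nat.cast_sub (by omega : i ≤ m - 1)]
        ring
      rw [hcast]
      have hmc : (m:ℝ) ≤ c := Nat.floor_le hc
      rw [div_le_iff₀ (by positivity : (0:ℝ) < 2*a)]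
      field_simp
      nlinarith [hmc]
    calc ∑ i ∈ Finset.range m, gEfun a c i ≤ ∑ i ∈ Finset.range m, r ^ (m - 1 - i) :=
        Finset.sum_le_sum hterm
      _ = ∑ i ∈ Finset.range m, r ^ i := Finset.sum_range_reflect (fun i => r ^ i) m
      _ ≤ ∑' i : ℕ, r ^ i := Summable.sum_le_tsum _ (fun i _ => by positivity) hgeo
      _ = (1 - r)⁻¹ := hgeo_sum
  -- tail part
  have hterm2 : ∀ k : ℕ, gEfun a c (k + m) ≤ r ^ k := by
    intro k
    have hjc : ¬ (((k + m : ℕ):ℝ) + 1) ≤ c := by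
      push_neg
      calc c < (m:ℝ) + 1 := Nat.lt_floor_add_one c
        _ ≤ ((k + m : ℕ):ℝ) + 1 := by push_cast; linarith [Nat.cast_nonneg (α := ℝ) k]
    unfold gEfun
    rw [if_neg hjc]
    have : r ^ k = Real.exp ((k:ℝ) * (-(1/(2*a)))) := by rw [← Real.exp_nat_mul]
    rw [this]
    apply Real.exp_le_exp.mpr
    have hcm : c ≤ (m:ℝ) + 1 := (Nat.lt_floor_add_one c).le
    rw [div_le_iff₀ (by positivity : (0:ℝ) < 2*a)]
    push_cast
    have he : (k:ℝ) * -(1/(2*a)) * (2*a) = -k := by field_simp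
    rw [he]
    linarith [Nat.cast_nonneg (α := ℝ) k]
  have htail : ∑' k : ℕ, gEfun a c (k + m) ≤ (1 - r)⁻¹ := by
    rw [← hgeo_sum]
    exact Summable.tsum_le_tsum hterm2 ((summable_nat_add_iff m).mpr hsum) hgeo
  have hle := one_sub_exp_inv_le ha
  have : ∑' i, gEfun a c i ≤ (1 - r)⁻¹ + (1 - r)⁻¹ := by
    rw [← hsplit]
    exact add_le_add hfirst htail
  linarith


/-- `h_n(a,f₀) = (1/log²(n/a)) Σ_{i≥1} n²·i·e^{i/a}·f₀ᵢ²/(a(a e^{i/a}+n)²)`. -/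
noncomputable def hfun (n a : ℝ) (f : ℕ → ℝ) : ℝ :=
  (1 / Real.log (n / a) ^ 2) *
    ∑' i : ℕ, n ^ 2 * ((i : ℝ) + 1) * Real.exp (((i : ℝ) + 1) / a) * f (i + 1) ^ 2 /
      (a * (a * Real.exp (((i : ℝ) + 1) / a) + n) ^ 2)

/-- For every `β ≥ β₀ > 0`, `M > 0`, `b > 0` there is a constant `C` such that for all
sufficiently large `n`: if `a ≥ C·n^{1/(1+2β)}·(log n)^{-1-1/(1+2β)}` and `a ≤ n/e`, then
`h_n(a,f₀) < b` for every `f₀` in the hyperrectangle `Θ^β(M)`. -/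
theorem stmt4 (β₀ β M b : ℝ) (hβ₀ : 0 < β₀) (hβ : β₀ ≤ β) (hM : 0 < M) (hb : 0 < b) :
    ∃ C : ℝ, 0 < C ∧ ∃ N : ℝ, ∀ n : ℝ, N ≤ n → ∀ a : ℝ,
      C * n ^ (1 / (1 + 2 * β)) * Real.log n ^ (-1 - 1 / (1 + 2 * β)) ≤ a →
      a ≤ n / Real.exp 1 →
      ∀ f : ℕ → ℝ, (∀ i : ℕ, 1 ≤ i → (i : ℝ) ^ (2 * β + 1) * f i ^ 2 ≤ M) →
      hfun n a f < b := by
  have hβ0 : (0:ℝ) < β := lt_of_lt_of_le hβ₀ hβ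
  have h12β : (0:ℝ) < 1 + 2*β := by linarith
  set γ := min β₀ (1/4 : ℝ) with hγdef
  have hγ0 : 0 < γ := lt_min hβ₀ (by norm_num)
  have hγ4 : γ ≤ 1/4 := min_le_right _ _
  have hγβ : γ ≤ β := le_trans (min_le_left _ _) hβ
  set q := 2*γ with hqdef
  have hq0 : 0 < q := by positivity
  have hq1 : q ≤ 1/2 := by rw [hqdef]; linarith
  have hq2β : q ≤ 2*β := by rw [hqdef]; linarith
  set s := 1 / (1 + 2 * β) with hsdef
  have hs0 : 0 < s := by positivity
  have hs1 : s ≤ 1 := by rw [hsdef, div_le_one h12β]; linarith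
  set K₁ := 2 * M * Real.exp (4*β) * (4*β) ^ (1-q) with hK₁def
  have hK₁0 : 0 < K₁ := by
    have : (0:ℝ) < (4*β) ^ (1-q) := Real.rpow_pos_of_pos (by linarith) _
    positivity
  set ε := β/(1+2*β) with hεdef
  have hε0 : 0 < ε := by positivity
  set C := max 1 ((32 * M * ε ^ (-(2+2*β)) / b) ^ s) with hCdef
  have hC1 : (1:ℝ) ≤ C := le_max_left _ _
  have hC0 : (0:ℝ) < C := lt_of_lt_of_le one_pos hC1
  refine ⟨C, hC0, ?_⟩
  set A₀ := max 1 ((4*K₁/b) ^ q⁻¹) with hA₀def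
  have hA₀1 : (1:ℝ) ≤ A₀ := le_max_left _ _
  have hA₀0 : (0:ℝ) < A₀ := lt_of_lt_of_le one_pos hA₀1
  -- eventual facts
  have F1 : ∀ᶠ n : ℝ in Filter.atTop, 8 * M * n ^ (-β) < b/4 := by
    have ht : Filter.Tendsto (fun n : ℝ => 8 * M * n ^ (-β)) Filter.atTop (nhds (8*M*0)) :=
      (tendsto_rpow_neg_atTop hβ0).const_mul (8*M)
    rw [mul_zero] at ht
    exact ht.eventually_lt_const (by positivity)
  have F2 : ∀ᶠ n : ℝ in Filter.atTop, Real.exp 2 ≤ n := Filter.eventually_ge_atTop _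
  have F3 : ∀ᶠ n : ℝ in Filter.atTop, A₀ * (Real.log n)^2 ≤ n ^ s := by
    have hlog := isLittleO_log_rpow_atTop (by positivity : (0:ℝ) < s/2)
    have hc0 : (0:ℝ) < (Real.sqrt A₀)⁻¹ := by positivity
    have hev := hlog.def hc0
    filter_upwards [hev, Filter.eventually_ge_atTop (1:ℝ)] with n h1 h2
    have hn0 : (0:ℝ) < n := by linarith
    rw [Real.norm_eq_abs, Real.norm_eq_abs, abs_of_nonneg (Real.log_nonneg h2),
      abs_of_nonneg (Real.rpow_nonneg hn0.le _)] at h1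
    have h3 : (Real.log n)^2 ≤ ((Real.sqrt A₀)⁻¹ * n ^ (s/2))^2 :=
      pow_le_pow_left₀ (Real.log_nonneg h2) h1 2
    have h4 : ((Real.sqrt A₀)⁻¹ * n ^ (s/2))^2 = A₀⁻¹ * n ^ s := by
      have e1 : ((Real.sqrt A₀)⁻¹)^2 = A₀⁻¹ := by
        rw [← Real.sqrt_inv, Real.sq_sqrt (by positivity)]
      have e2 : (n^(s/2))^2 = n^s := by
        rw [← Real.rpow_natCast (n^(s/2)) 2, ← Real.rpow_mul hn0.le]
        congr 1
        push_cast
        ring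
      rw [mul_pow, e1, e2]
    rw [h4] at h3
    calc A₀ * (Real.log n)^2 ≤ A₀ * (A₀⁻¹ * n ^ s) := by
          exact mul_le_mul_of_nonneg_left h3 hA₀0.le
      _ = n ^ s := by field_simp
  obtain ⟨N, hN⟩ := Filter.eventually_atTop.mp (F1.and (F2.and F3))
  refine ⟨N, ?_⟩
  intro n hn a hamin hana f hf
  obtain ⟨hF1, hF2, hF3⟩ := hN n hn
  have hn0 : (0:ℝ) < n := lt_of_lt_of_le (Real.exp_pos 2) hF2
  have hlogn2 : (2:ℝ) ≤ Real.log n := by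
    rw [show (2:ℝ) = Real.log (Real.exp 2) from (Real.log_exp 2).symm]
    exact Real.log_le_log (Real.exp_pos 2) hF2
  have hlogn0 : (0:ℝ) < Real.log n := by linarith
  have hamin0 : (0:ℝ) < C * n ^ s * Real.log n ^ (-1 - s) := by
    have h1 : (0:ℝ) < n ^ s := Real.rpow_pos_of_pos hn0 _
    have h2 : (0:ℝ) < Real.log n ^ (-1 - s) := Real.rpow_pos_of_pos hlogn0 _
    positivity
  have ha0 : (0:ℝ) < a := lt_of_lt_of_le hamin0 hamin
  -- a ≥ A₀
  have haA₀ : A₀ ≤ a := by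
    have h2 : Real.log n ^ (-2:ℝ) = ((Real.log n)^2)⁻¹ := by
      rw [show (-2:ℝ) = -(2:ℕ) by norm_num, Real.rpow_neg hlogn0.le, Real.rpow_natCast]
    have h1 : Real.log n ^ (-2 : ℝ) ≤ Real.log n ^ (-1 - s) :=
      Real.rpow_le_rpow_of_exponent_le (by linarith) (by linarith)
    have h3 : A₀ ≤ n ^ s * ((Real.log n)^2)⁻¹ := by
      rw [← div_eq_mul_inv, le_div_iff₀ (by positivity)]
      linarith [hF3]
    calc A₀ ≤ n ^ s * ((Real.log n)^2)⁻¹ := h3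
      _ = 1 * n ^ s * Real.log n ^ (-2:ℝ) := by rw [h2]; ring
      _ ≤ C * n ^ s * Real.log n ^ (-1 - s) := by
          have hns : (0:ℝ) ≤ n ^ s := (Real.rpow_pos_of_pos hn0 _).le
          apply mul_le_mul (by
            exact mul_le_mul_of_nonneg_right hC1 hns) h1
            (Real.rpow_pos_of_pos hlogn0 _).le (by positivity)
      _ ≤ a := hamin
  have ha1 : (1:ℝ) ≤ a := le_trans hA₀1 haA₀
  -- L facts
  have hna : Real.exp 1 ≤ n / a := by
    rw [le_div_iff₀ ha0]
    have := (le_div_iff₀ (Real.exp_pos 1)).mp hana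
    linarith
  have hna0 : (0:ℝ) < n / a := lt_of_lt_of_le (Real.exp_pos 1) hna
  set L := Real.log (n/a) with hLdef
  have hL1 : (1:ℝ) ≤ L := by
    rw [hLdef, show (1:ℝ) = Real.log (Real.exp 1) from (Real.log_exp 1).symm]
    exact Real.log_le_log (Real.exp_pos 1) hna
  have hL0 : (0:ℝ) < L := by linarith
  have hexpL : Real.exp L = n / a := Real.exp_log hna0
  set I0 := a * L with hI0def
  have hI00 : (0:ℝ) < I0 := by positivity
  have hI01 : (1:ℝ) ≤ I0 := by
    rw [hI0def]
    calc (1:ℝ) = 1*1 := by ring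
      _ ≤ a * L := mul_le_mul ha1 hL1 zero_le_one (by linarith)
  -- the summand
  set t : ℕ → ℝ := fun i => n ^ 2 * ((i : ℝ) + 1) * Real.exp (((i : ℝ) + 1) / a) * f (i + 1) ^ 2 /
      (a * (a * Real.exp (((i : ℝ) + 1) / a) + n) ^ 2) with htdef
  set cA := M * Real.exp (4*β) / a with hcAdef
  set cB := M / a * I0 ^ (-(2*β)) * Real.exp L with hcBdef
  have hcA0 : (0:ℝ) ≤ cA := by positivity
  have hcB0 : (0:ℝ) ≤ cB := by
    have : (0:ℝ) < I0 ^ (-(2*β)) := Real.rpow_pos_of_pos hI00 _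
    positivity
  set W : ℕ → ℝ := fun i => cA * gAfun q (4*β*a) i + cB * gEfun a I0 i with hWdef
  have hpoint : ∀ i, t i ≤ W i := by
    intro i
    set j : ℝ := (i:ℝ) + 1 with hjdef
    have hj1 : (1:ℝ) ≤ j := by
      rw [hjdef]; linarith [Nat.cast_nonneg (α := ℝ) i]
    have hj0 : (0:ℝ) < j := by linarith
    set x := Real.exp (j / a) with hxdef
    have hx0 : (0:ℝ) < x := Real.exp_pos _
    have hx1 : (1:ℝ) ≤ x := Real.one_le_exp (by positivity)
    have hd0 : (0:ℝ) < a * x + n := by positivity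
    have hgA0 : (0:ℝ) ≤ gAfun q (4*β*a) i := gAfun_nonneg _ _ _
    have hgE0 : (0:ℝ) ≤ gEfun a I0 i := gEfun_nonneg _ _ _
    have hjq0 : (0:ℝ) < j ^ (-(2*β)) := Real.rpow_pos_of_pos hj0 _
    have hI0q0 : (0:ℝ) < I0 ^ (-(2*β)) := Real.rpow_pos_of_pos hI00 _
    have hfj : j * f (i+1) ^ 2 ≤ M * j ^ (-(2*β)) := by
      have h0 := hf (i+1) (by omega)
      have hc : ((i+1:ℕ):ℝ) = j := by rw [hjdef]; push_cast; ring
      rw [hc] at h0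
      have e1 : j ^ (-(2*β)) * j ^ (2*β+1) = j := by
        rw [← Real.rpow_add hj0, show -(2*β) + (2*β+1) = 1 by ring, Real.rpow_one]
      calc j * f (i+1)^2 = j ^ (-(2*β)) * (j ^ (2*β+1) * f (i+1)^2) := by
            rw [← mul_assoc, e1]
        _ ≤ j ^ (-(2*β)) * M := mul_le_mul_of_nonneg_left h0 hjq0.le
        _ = M * j ^ (-(2*β)) := mul_comm _ _
    have hteq : t i = (j * f (i+1)^2) * x * (n / (a*x+n))^2 / a := by
      rw [htdef]
      simp only
      rw [← hjdef, ← hxdef]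
      field_simp
    have bound1 : t i ≤ M * j ^ (-(2*β)) * x / a := by
      rw [hteq]
      have h1 : (n/(a*x+n))^2 ≤ 1 := by
        apply pow_le_one₀ (by positivity)
        rw [div_le_one hd0]
        linarith [mul_pos ha0 hx0]
      calc (j * f (i+1)^2) * x * (n/(a*x+n))^2 / a
          ≤ (M * j ^ (-(2*β))) * x * 1 / a := by
            apply div_le_div_of_nonneg_right ?_ ha0.le
            apply mul_le_mul (mul_le_mul_of_nonneg_right hfj hx0.le) h1
              (by positivity) (by positivity)
        _ = M * j ^ (-(2*β)) * x / a := by ring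
    have bound2 : t i ≤ M * j ^ (-(2*β)) * ((n/a)^2 * x⁻¹) / a := by
      have h2 : t i ≤ (n^2 * j * x * f (i+1)^2) / (a * (a*x)^2) := by
        rw [htdef]
        simp only
        rw [← hjdef, ← hxdef]
        apply div_le_div_of_nonneg_left (by positivity) (by positivity)
        have h3 : (a*x)^2 ≤ (a*x+n)^2 :=
          pow_le_pow_left₀ (by positivity) (by linarith) 2
        exact mul_le_mul_of_nonneg_left h3 ha0.le
      have h4 : (n^2 * j * x * f (i+1)^2) / (a * (a*x)^2)
          = (j * f (i+1)^2) * ((n/a)^2 * x⁻¹) / a := by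
        field_simp
      calc t i ≤ _ := h2
        _ = (j * f (i+1)^2) * ((n/a)^2 * x⁻¹) / a := h4
        _ ≤ (M * j ^ (-(2*β))) * ((n/a)^2 * x⁻¹) / a := by
            apply div_le_div_of_nonneg_right ?_ ha0.le
            apply mul_le_mul_of_nonneg_right hfj (by positivity)
    have hsq : (n/a)^2 = Real.exp (2*L) := by
      rw [← hexpL, sq, ← Real.exp_add]
      congr 1
      ring
    have hxinv : x⁻¹ = Real.exp (-(j/a)) := by rw [hxdef, ← Real.exp_neg]
    -- high regime bound
    have hhigh : I0 < j → t i ≤ cB * gEfun a I0 i := by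
      intro hIj
      have hbranch : gEfun a I0 i = Real.exp ((I0 - j)/(2*a)) := by
        unfold gEfun
        rw [← hjdef, if_neg (by push_neg; exact hIj)]
      have hjr : j ^ (-(2*β)) ≤ I0 ^ (-(2*β)) :=
        Real.rpow_le_rpow_of_nonpos hI00 hIj.le (by linarith)
      have hexpterm : Real.exp (2*L) * Real.exp (-(j/a)) ≤
          Real.exp L * Real.exp ((I0 - j)/(2*a)) := by
        rw [← Real.exp_add, ← Real.exp_add]
        apply Real.exp_le_exp.mpr
        have e1 : 2*L - j/a = L + (I0 - j)/a := by
          rw [hI0def]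
          field_simp
          ring
        have e2 : (I0 - j)/a ≤ (I0 - j)/(2*a) := by
          rw [div_le_div_iff₀ ha0 (by positivity)]
          have hIj' : I0 - j ≤ 0 := by linarith
          exact mul_le_mul_of_nonpos_left (by linarith : a ≤ 2*a) hIj'
        have e3 : 2*L + -(j/a) = 2*L - j/a := by ring
        rw [e3, e1]
        linarith
      calc t i ≤ M * j ^ (-(2*β)) * ((n/a)^2 * x⁻¹) / a := bound2
        _ = M/a * (j^(-(2*β)) * (Real.exp (2*L) * Real.exp (-(j/a)))) := by
            rw [hsq, hxinv]; ring
        _ ≤ M/a * (I0^(-(2*β)) * (Real.exp L * Real.exp ((I0-j)/(2*a)))) := by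
            apply mul_le_mul_of_nonneg_left ?_ (by positivity)
            exact mul_le_mul hjr hexpterm (by positivity) hI0q0.le
        _ = cB * gEfun a I0 i := by rw [hbranch, hcBdef]; ring
    by_cases hc2 : j ≤ I0
    · by_cases hc1 : j ≤ 4*β*a
      · -- low regime
        have hbranch : gAfun q (4*β*a) i = j ^ (-q) := by
          unfold gAfun
          rw [← hjdef, if_pos hc1]
        have e1 : j ^ (-(2*β)) ≤ j ^ (-q) :=
          Real.rpow_le_rpow_of_exponent_le hj1 (by linarith)
        have e2 : x ≤ Real.exp (4*β) := by
          rw [hxdef]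
          apply Real.exp_le_exp.mpr
          rw [div_le_iff₀ ha0]
          linarith [hc1]
        have hlow : t i ≤ cA * gAfun q (4*β*a) i := by
          rw [hbranch]
          calc t i ≤ M * j ^ (-(2*β)) * x / a := bound1
            _ ≤ M * j ^ (-q) * Real.exp (4*β) / a := by
                apply div_le_div_of_nonneg_right ?_ ha0.le
                apply mul_le_mul (mul_le_mul_of_nonneg_left e1 hM.le) e2 hx0.le
                  (by positivity)
            _ = cA * j ^ (-q) := by rw [hcAdef]; ring
        have := mul_nonneg hcB0 hgE0
        rw [hWdef]
        simp only
        linarith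
      · -- middle regime
        push_neg at hc1
        have hbranch : gEfun a I0 i = Real.exp ((j - I0)/(2*a)) := by
          unfold gEfun
          rw [← hjdef, if_pos hc2]
        have hkey : j ^ (-(2*β)) * x ≤ I0 ^ (-(2*β)) * Real.exp L
            * Real.exp ((j - I0)/(2*a)) := by
          have hIj0 : (0:ℝ) < I0/j := by positivity
          have hratio : (I0/j) ^ (2*β) ≤ Real.exp ((I0 - j)/(2*a)) := by
            rw [Real.rpow_def_of_pos hIj0]
            apply Real.exp_le_exp.mpr
            have hlog : Real.log (I0/j) ≤ I0/j - 1 := Real.log_le_sub_one_of_pos hIj0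
            have h6 : I0/j - 1 = (I0 - j)/j := by field_simp
            have h7 : (0:ℝ) ≤ I0 - j := by linarith
            have h8 : 2*β*(2*a) ≤ j := by
              have he : 2*β*(2*a) = 4*β*a := by ring
              linarith
            have hnum : (I0-j)*(2*β*(2*a)) ≤ (I0-j)*j := mul_le_mul_of_nonneg_left h8 h7
            have h9 : (2*β)*((I0 - j)/j) ≤ (I0 - j)/(2*a) := by
              calc (2*β)*((I0 - j)/j) = ((I0-j)*(2*β*(2*a)))/(j*(2*a)) := by
                    field_simp
                _ ≤ ((I0-j)*j)/(j*(2*a)) := by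
                    apply div_le_div_of_nonneg_right hnum (by positivity)
                _ = (I0 - j)/(2*a) := by
                    rw [mul_comm (I0-j) j, mul_div_mul_left _ _ hj0.ne']
            calc Real.log (I0/j) * (2*β) ≤ (I0/j - 1) * (2*β) :=
                  mul_le_mul_of_nonneg_right hlog (by linarith)
              _ = (2*β)*((I0 - j)/j) := by rw [h6]; ring
              _ ≤ (I0 - j)/(2*a) := h9
          have e7 : j ^ (-(2*β)) = I0 ^ (-(2*β)) * (I0/j) ^ (2*β) := by
            rw [Real.div_rpow hI00.le hj0.le, Real.rpow_neg hI00.le, Real.rpow_neg hj0.le]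
            field_simp
          rw [e7, hxdef]
          calc I0^(-(2*β)) * (I0/j)^(2*β) * Real.exp (j/a)
              ≤ I0^(-(2*β)) * Real.exp ((I0-j)/(2*a)) * Real.exp (j/a) := by
                apply mul_le_mul_of_nonneg_right ?_ (Real.exp_pos _).le
                exact mul_le_mul_of_nonneg_left hratio hI0q0.le
            _ = I0^(-(2*β)) * Real.exp L * Real.exp ((j - I0)/(2*a)) := by
                rw [mul_assoc, mul_assoc, ← Real.exp_add, ← Real.exp_add]
                have hIa : I0 / a = L := by rw [hI0def]; field_simp
                have harg : (I0 - j)/(2*a) + j/a = I0/a + (j - I0)/(2*a) := by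
                  field_simp
                  ring
                rw [harg, hIa]
        calc t i ≤ M * j ^ (-(2*β)) * x / a := bound1
          _ = M/a * (j^(-(2*β)) * x) := by ring
          _ ≤ M/a * (I0^(-(2*β)) * Real.exp L * Real.exp ((j - I0)/(2*a))) := by
              apply mul_le_mul_of_nonneg_left hkey (by positivity)
          _ = cB * gEfun a I0 i := by rw [hbranch, hcBdef]; ring
          _ ≤ W i := by
              rw [hWdef]
              simp only
              have := mul_nonneg hcA0 hgA0
              linarith
    · push_neg at hc2
      have h := hhigh hc2
      have := mul_nonneg hcA0 hgA0
      rw [hWdef]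
      simp only
      linarith

  -- summability
  have hgA_sum : Summable (gAfun q (4*β*a)) := gAfun_summable _ _
  have hgE_sum : Summable (gEfun a I0) := gEfun_summable ha1 hI00.le
  have hW_sum : Summable W := (hgA_sum.mul_left cA).add (hgE_sum.mul_left cB)
  have ht_nonneg : ∀ i, 0 ≤ t i := by
    intro i
    rw [htdef]
    have := Real.exp_pos (((i:ℝ)+1)/a)
    positivity
  have ht_sum : Summable t := Summable.of_nonneg_of_le ht_nonneg hpoint hW_sum
  have htsum : ∑' i, t i ≤ cA * (2 * (4*β*a) ^ (1-q)) + cB * (8*a) := by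
    calc ∑' i, t i ≤ ∑' i, W i := Summable.tsum_le_tsum hpoint ht_sum hW_sum
      _ = cA * (∑' i, gAfun q (4*β*a) i) + cB * (∑' i, gEfun a I0 i) := by
          rw [hWdef, Summable.tsum_add (hgA_sum.mul_left cA) (hgE_sum.mul_left cB),
            tsum_mul_left, tsum_mul_left]
      _ ≤ cA * (2 * (4*β*a) ^ (1-q)) + cB * (8*a) := by
          have h1 := gAfun_tsum_le hq0 hq1 (by positivity : (0:ℝ) ≤ 4*β*a)
          have h2 := gEfun_tsum_le ha1 hI00.le
          have h3 := fun i => gAfun_nonneg q (4*β*a) i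
          have h4 := fun i => gEfun_nonneg a I0 i
          gcongr
  -- goal reduction
  show (1 / L ^ 2) * ∑' i : ℕ, t i < b
  have hL2 : (0:ℝ) < L^2 := by positivity
  have hstep1 : (1/L^2) * ∑' i, t i ≤
      (1/L^2) * (cA * (2*(4*β*a)^(1-q))) + (1/L^2) * (cB*(8*a)) := by
    rw [← mul_add]
    exact mul_le_mul_of_nonneg_left htsum (by positivity)
  -- Term 1
  have hT1 : (1/L^2) * (cA * (2*(4*β*a)^(1-q))) ≤ K₁ * a^(-q) := by
    have h1 : (1:ℝ)/L^2 ≤ 1 := by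
      rw [div_le_one hL2]
      calc (1:ℝ) = 1*1 := by ring
        _ ≤ L*L := mul_le_mul hL1 hL1 zero_le_one (by linarith)
        _ = L^2 := by ring
    have e : a ^ (1 - q) = a ^ (-q) * a := by
      rw [show (1-q : ℝ) = -q + 1 by ring, Real.rpow_add ha0, Real.rpow_one]
    have h2 : cA * (2*(4*β*a)^(1-q)) = K₁ * a ^ (-q) := by
      rw [hcAdef, hK₁def, Real.mul_rpow (by positivity : (0:ℝ) ≤ 4*β) ha0.le, e]
      field_simp
    rw [h2]
    exact mul_le_of_le_one_left (by positivity) h1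
  -- Term 2 (equality)
  have hT2 : (1/L^2) * (cB * (8*a)) = 8*M*(n * a^(-(1+2*β))) * L^(-(2+2*β)) := by
    have e1 : I0 ^ (-(2*β)) = a^(-(2*β)) * L^(-(2*β)) := by
      rw [hI0def, Real.mul_rpow ha0.le hL0.le]
    have e4 : a ^ (-(1+2*β)) = a⁻¹ * a^(-(2*β)) := by
      rw [show -(1+2*β) = -1 + -(2*β) by ring, Real.rpow_add ha0, Real.rpow_neg_one]
    have e5 : L ^ (-(2+2*β)) = L^(-(2*β)) * (L^2)⁻¹ := by
      rw [show -(2+2*β) = -(2*β) + (-2:ℝ) by ring, Real.rpow_add hL0]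
      congr 1
      rw [show (-2:ℝ) = -(2:ℕ) by norm_num, Real.rpow_neg hL0.le, Real.rpow_natCast]
    rw [hcBdef, hexpL, e1, e4, e5]
    have hLq : L ^ (-(2*β)) ≠ 0 := (Real.rpow_pos_of_pos hL0 _).ne'
    have haq : a ^ (-(2*β)) ≠ 0 := (Real.rpow_pos_of_pos ha0 _).ne'
    field_simp
  -- Final term 1 bound
  have hfin1 : K₁ * a ^ (-q) ≤ b/4 := by
    have h1 : (4*K₁/b) ^ q⁻¹ ≤ a := le_trans (le_trans (le_max_right _ _) hA₀def.ge) haA₀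
    have h2 : 4*K₁/b ≤ a ^ q := by
      have h3 := Real.rpow_le_rpow (by positivity) h1 hq0.le
      rwa [← Real.rpow_mul (by positivity), inv_mul_cancel₀ hq0.ne', Real.rpow_one] at h3
    have h4 : K₁ * a ^ (-q) = K₁ / a ^ q := by
      rw [Real.rpow_neg ha0.le, div_eq_mul_inv]
    rw [h4]
    rw [div_le_iff₀ (Real.rpow_pos_of_pos ha0 q)]
    have hbq : 0 < 4*K₁/b := by positivity
    calc K₁ = (b/4) * (4*K₁/b) := by field_simp
      _ ≤ (b/4) * a ^ q := by
          exact mul_le_mul_of_nonneg_left h2 (by positivity)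
  -- Final term 2 bound
  have hfin2 : 8*M*(n * a^(-(1+2*β))) * L^(-(2+2*β)) ≤ b/4 := by
    by_cases hcase : L ≤ ε * Real.log n
    · -- small L case
      have key : n * a^(-(1+2*β)) = (n/a)^(1+2*β) * n^(-(2*β)) := by
        rw [Real.div_rpow hn0.le ha0.le, Real.rpow_neg ha0.le, Real.rpow_neg hn0.le,
          div_eq_mul_inv]
        have e : n ^ (1+2*β) * (n ^ (2*β))⁻¹ = n := by
          rw [← Real.rpow_neg hn0.le, ← Real.rpow_add hn0,
            show 1+2*β + -(2*β) = 1 by ring, Real.rpow_one]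
        calc n * (a ^ (1+2*β))⁻¹ = (n ^ (1+2*β) * (n ^ (2*β))⁻¹) * (a ^ (1+2*β))⁻¹ := by rw [e]
          _ = n ^ (1+2*β) * (a ^ (1+2*β))⁻¹ * (n ^ (2*β))⁻¹ := by ring
      have h1 : n/a ≤ n ^ ε := by
        rw [← hexpL, Real.rpow_def_of_pos hn0]
        exact Real.exp_le_exp.mpr (by rw [mul_comm]; exact hcase)
      have h3 : (n/a)^(1+2*β) ≤ (n^ε)^(1+2*β) :=
        Real.rpow_le_rpow hna0.le h1 (by linarith)
      have h4 : (n^ε)^(1+2*β) = n^β := by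
        rw [← Real.rpow_mul hn0.le]
        congr 1
        rw [hεdef]
        field_simp
      have h5 : L^(-(2+2*β)) ≤ 1 := Real.rpow_le_one_of_one_le_of_nonpos hL1 (by linarith)
      have h6 : n * a^(-(1+2*β)) ≤ n ^ (-β) := by
        rw [key]
        calc (n/a)^(1+2*β) * n^(-(2*β)) ≤ n^β * n^(-(2*β)) := by
              exact mul_le_mul_of_nonneg_right (h4 ▸ h3) (Real.rpow_pos_of_pos hn0 _).le
          _ = n^(-β) := by rw [← Real.rpow_add hn0]; congr 1; ring
      calc 8*M*(n * a^(-(1+2*β))) * L^(-(2+2*β)) ≤ 8*M*(n^(-β)) * 1 := by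
            apply mul_le_mul (mul_le_mul_of_nonneg_left h6 (by positivity)) h5
              (Real.rpow_pos_of_pos hL0 _).le (by positivity)
        _ = 8*M*n^(-β) := by ring
        _ ≤ b/4 := hF1.le
    · -- large L case
      push_neg at hcase
      have hεlog : (0:ℝ) < ε * Real.log n := by positivity
      have h1 : L^(-(2+2*β)) ≤ (ε*Real.log n)^(-(2+2*β)) :=
        Real.rpow_le_rpow_of_nonpos hεlog hcase.le (by linarith)
      have h2 : (ε*Real.log n)^(-(2+2*β)) = ε^(-(2+2*β)) * (Real.log n)^(-(2+2*β)) :=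
        Real.mul_rpow hε0.le hlogn0.le
      have hCpow : (0:ℝ) < C^(1+2*β) := Real.rpow_pos_of_pos hC0 _
      have h3 : C^(1+2*β) * n * (Real.log n)^(-(2+2*β)) ≤ a ^ (1+2*β) := by
        have h4 : (C * n^s * Real.log n ^ (-1-s))^(1+2*β) ≤ a^(1+2*β) :=
          Real.rpow_le_rpow hamin0.le hamin (by linarith)
        have h5 : (C * n^s * Real.log n ^ (-1-s))^(1+2*β)
            = C^(1+2*β) * n * (Real.log n)^(-(2+2*β)) := by
          rw [Real.mul_rpow (by positivity) (Real.rpow_pos_of_pos hlogn0 _).le,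
              Real.mul_rpow hC0.le (Real.rpow_pos_of_pos hn0 _).le,
              ← Real.rpow_mul hn0.le, ← Real.rpow_mul hlogn0.le,
              show s*(1+2*β) = 1 by rw [hsdef]; field_simp,
              show (-1-s)*(1+2*β) = -(2+2*β) by rw [hsdef]; field_simp; ring,
              Real.rpow_one]
        linarith [h5 ▸ h4]
      have hden : (0:ℝ) < C^(1+2*β) * n * (Real.log n)^(-(2+2*β)) := by
        have := Real.rpow_pos_of_pos hlogn0 (-(2+2*β))
        positivity
      have h6 : n * a^(-(1+2*β)) ≤ C^(-(1+2*β)) * (Real.log n)^(2+2*β) := by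
        have h7 : n / a^(1+2*β) ≤ n / (C^(1+2*β) * n * (Real.log n)^(-(2+2*β))) := by
          apply div_le_div_of_nonneg_left hn0.le hden h3
        have h8 : n / (C^(1+2*β) * n * (Real.log n)^(-(2+2*β)))
            = C^(-(1+2*β)) * (Real.log n)^(2+2*β) := by
          rw [Real.rpow_neg hC0.le, Real.rpow_neg hlogn0.le]
          have hlp : (0:ℝ) < Real.log n ^ (2+2*β) := Real.rpow_pos_of_pos hlogn0 _
          field_simp
        rw [Real.rpow_neg ha0.le, ← div_eq_mul_inv] at *
        calc n / a^(1+2*β) ≤ _ := h7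
          _ = _ := h8
      have hLp : (0:ℝ) < L^(-(2+2*β)) := Real.rpow_pos_of_pos hL0 _
      have hone : (Real.log n)^(2+2*β) * (Real.log n)^(-(2+2*β)) = 1 := by
        rw [← Real.rpow_add hlogn0, show (2+2*β) + -(2+2*β) = 0 by ring, Real.rpow_zero]
      have hεp : (0:ℝ) < ε^(-(2+2*β)) := Real.rpow_pos_of_pos hε0 _
      calc 8*M*(n * a^(-(1+2*β))) * L^(-(2+2*β))
          ≤ 8*M*(C^(-(1+2*β)) * (Real.log n)^(2+2*β))
              * (ε^(-(2+2*β)) * (Real.log n)^(-(2+2*β))) := by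
            apply mul_le_mul (mul_le_mul_of_nonneg_left h6 (by positivity))
              (h1.trans_eq h2) hLp.le
            have := Real.rpow_pos_of_pos hC0 (-(1+2*β))
            have := Real.rpow_pos_of_pos hlogn0 (2+2*β)
            positivity
        _ = 8*M*C^(-(1+2*β))*ε^(-(2+2*β))
              * ((Real.log n)^(2+2*β) * (Real.log n)^(-(2+2*β))) := by ring
        _ = 8*M*C^(-(1+2*β))*ε^(-(2+2*β)) := by rw [hone, mul_one]
        _ ≤ b/4 := by
            have hC2 : 32*M*ε^(-(2+2*β))/b ≤ C^(1+2*β) := by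
              have h6' : (32*M*ε^(-(2+2*β))/b) ^ s ≤ C := le_trans (le_max_right _ _) hCdef.ge
              have h7' := Real.rpow_le_rpow (by positivity) h6' (by linarith : (0:ℝ) ≤ 1+2*β)
              rwa [← Real.rpow_mul (by positivity),
                show s*(1+2*β) = 1 by rw [hsdef]; field_simp, Real.rpow_one] at h7'
            rw [Real.rpow_neg hC0.le,
              show 8*M*(C^(1+2*β))⁻¹*ε^(-(2+2*β)) = (8*M*ε^(-(2+2*β)))/(C^(1+2*β)) by
                rw [div_eq_mul_inv]; ring,
              div_le_iff₀ hCpow]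
            calc 8*M*ε^(-(2+2*β)) = (b/4) * (32*M*ε^(-(2+2*β))/b) := by field_simp; ring
              _ ≤ (b/4) * C^(1+2*β) := by
                  exact mul_le_mul_of_nonneg_left hC2 (by positivity)
        
  -- conclusion
  calc (1 / L ^ 2) * ∑' i : ℕ, t i
      ≤ (1/L^2) * (cA * (2*(4*β*a)^(1-q))) + (1/L^2) * (cB*(8*a)) := hstep1
    _ ≤ K₁ * a^(-q) + 8*M*(n * a^(-(1+2*β))) * L^(-(2+2*β)) := by
        rw [hT2]; exact add_le_add_left hT1 _
    _ ≤ b/4 + b/4 := add_le_add hfin1 hfin2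
    _ < b := by linarith
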